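/- Let A_1,…,A_6 be the linear endomorphisms of ℝ^6 (coordinates (X,Y,U1,U2,U3,U4)) given by A_1 = (3X, 2Y, 2U1, 2U2, U3, U4), A_2 = (0, X, 0, 0, −4U2, −4U1), A_3 = (0, 0, X, 0, −(2/3)U1, −2Y), A_4 = (0, 0, 0, X, −2Y, −(2/3)U2), A_5 = (0, 0, 0, 0, X, 0), A_6 = (0, 0, 0, 0, 0, X). Then for every linear form L : ℝ^6 → ℝ, the linear span of the seven linear forms L∘A_1, L∘A_2, L∘A_3, L∘A_4, L∘A_5, L∘A_6 and L in the dual space of ℝ^6 has dimension at most 5; in particular this span is never all of (ℝ^6)*. -/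

import Mathlib

open Matrix

/-- The linear part `A₁ = (3X, 2Y, 2U1, 2U2, U3, U4)` of the Euler vector field `η₁`. -/
noncomputable def A1 : (Fin 6 → ℝ) →ₗ[ℝ] (Fin 6 → ℝ) :=
  (Matrix.diagonal ![3, 2, 2, 2, 1, 1]).mulVecLin

/-- The linear part `A₂ = (0, X, 0, 0, −4U2, −4U1)` of `η₂`. -/
noncomputable def A2 : (Fin 6 → ℝ) →ₗ[ℝ] (Fin 6 → ℝ) :=
  ((Matrix.single 1 0 (1:ℝ) + Matrix.single 4 3 (-4) +
    Matrix.single 5 2 (-4) : Matrix (Fin 6) (Fin 6) ℝ)).mulVecLin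

/-- The linear part `A₃ = (0, 0, X, 0, −(2/3)U1, −2Y)` of `η₃`. -/
noncomputable def A3 : (Fin 6 → ℝ) →ₗ[ℝ] (Fin 6 → ℝ) :=
  ((Matrix.single 2 0 (1:ℝ) + Matrix.single 4 2 (-(2/3)) +
    Matrix.single 5 1 (-2) : Matrix (Fin 6) (Fin 6) ℝ)).mulVecLin

/-- The linear part `A₄ = (0, 0, 0, X, −2Y, −(2/3)U2)` of `η₄`. -/
noncomputable def A4 : (Fin 6 → ℝ) →ₗ[ℝ] (Fin 6 → ℝ) :=
  ((Matrix.single 3 0 (1:ℝ) + Matrix.single 4 1 (-2) +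
    Matrix.single 5 3 (-(2/3)) : Matrix (Fin 6) (Fin 6) ℝ)).mulVecLin

/-- The linear part `A₅ = (0, 0, 0, 0, X, 0)` of `η₅`. -/
noncomputable def A5 : (Fin 6 → ℝ) →ₗ[ℝ] (Fin 6 → ℝ) :=
  ((Matrix.single 4 0 (1:ℝ) : Matrix (Fin 6) (Fin 6) ℝ)).mulVecLin

/-- The linear part `A₆ = (0, 0, 0, 0, 0, X)` of `η₆`. -/
noncomputable def A6 : (Fin 6 → ℝ) →ₗ[ℝ] (Fin 6 → ℝ) :=
  ((Matrix.single 5 0 (1:ℝ) : Matrix (Fin 6) (Fin 6) ℝ)).mulVecLin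

/-- A standard basis matrix kills `Pi.single k 1` when its column index differs from `k`. -/
lemma aux_std6 (i j : Fin 6) (c : ℝ) (k : Fin 6) (hk : j ≠ k) :
    (Matrix.single i j c).mulVecLin (Pi.single k 1) = 0 := by
  funext l
  rw [Matrix.mulVecLin_apply, Matrix.mulVec_single]
  simp [Matrix.single_apply_of_ne i j c l k (fun h => hk h.2)]

lemma aux_A1_single (k : Fin 6) (hk : k = 4 ∨ k = 5) : A1 (Pi.single k 1) = Pi.single k 1 := by
  have h4 : (![3,2,2,2,1,1] : Fin 6 → ℝ) 4 = 1 := rfl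
  have h5 : (![3,2,2,2,1,1] : Fin 6 → ℝ) 5 = 1 := rfl
  rcases hk with rfl | rfl <;>
    rw [A1, Matrix.mulVecLin_apply, Matrix.diagonal_mulVec_single] <;> simp [h4, h5]

lemma aux_A2_single (k : Fin 6) (hk : k = 4 ∨ k = 5) : A2 (Pi.single k 1) = 0 := by
  have hc : ∀ j : Fin 6, j = 0 ∨ j = 3 ∨ j = 2 → j ≠ k := by
    rcases hk with rfl | rfl <;> rintro j (rfl | rfl | rfl) <;> decide
  rw [A2, Matrix.mulVecLin_add, Matrix.mulVecLin_add]
  simp [aux_std6 _ _ _ _ (hc 0 (Or.inl rfl)), aux_std6 _ _ _ _ (hc 3 (Or.inr (Or.inl rfl))),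
    aux_std6 _ _ _ _ (hc 2 (Or.inr (Or.inr rfl)))]

lemma aux_A3_single (k : Fin 6) (hk : k = 4 ∨ k = 5) : A3 (Pi.single k 1) = 0 := by
  have hc : ∀ j : Fin 6, j = 0 ∨ j = 2 ∨ j = 1 → j ≠ k := by
    rcases hk with rfl | rfl <;> rintro j (rfl | rfl | rfl) <;> decide
  rw [A3, Matrix.mulVecLin_add, Matrix.mulVecLin_add]
  simp [aux_std6 _ _ _ _ (hc 0 (Or.inl rfl)), aux_std6 _ _ _ _ (hc 2 (Or.inr (Or.inl rfl))),
    aux_std6 _ _ _ _ (hc 1 (Or.inr (Or.inr rfl)))]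

lemma aux_A4_single (k : Fin 6) (hk : k = 4 ∨ k = 5) : A4 (Pi.single k 1) = 0 := by
  have hc : ∀ j : Fin 6, j = 0 ∨ j = 1 ∨ j = 3 → j ≠ k := by
    rcases hk with rfl | rfl <;> rintro j (rfl | rfl | rfl) <;> decide
  rw [A4, Matrix.mulVecLin_add, Matrix.mulVecLin_add]
  simp [aux_std6 _ _ _ _ (hc 0 (Or.inl rfl)), aux_std6 _ _ _ _ (hc 1 (Or.inr (Or.inl rfl))),
    aux_std6 _ _ _ _ (hc 3 (Or.inr (Or.inr rfl)))]

lemma aux_A5_single (k : Fin 6) (hk : k = 4 ∨ k = 5) : A5 (Pi.single k 1) = 0 := by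
  have hc : (0 : Fin 6) ≠ k := by rcases hk with rfl | rfl <;> decide
  rw [A5]; exact aux_std6 _ _ _ _ hc

lemma aux_A6_single (k : Fin 6) (hk : k = 4 ∨ k = 5) : A6 (Pi.single k 1) = 0 := by
  have hc : (0 : Fin 6) ≠ k := by rcases hk with rfl | rfl <;> decide
  rw [A6]; exact aux_std6 _ _ _ _ hc

lemma ker_eval_le6 (v : Fin 6 → ℝ) (hv : v ≠ 0) :
    Module.finrank ℝ (LinearMap.ker (LinearMap.applyₗ (R := ℝ) v :
      ((Fin 6 → ℝ) →ₗ[ℝ] ℝ) →ₗ[ℝ] ℝ)) ≤ 5 := by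
  set ev : ((Fin 6 → ℝ) →ₗ[ℝ] ℝ) →ₗ[ℝ] ℝ := LinearMap.applyₗ (R := ℝ) v
  have h := LinearMap.finrank_range_add_finrank_ker ev
  have hdual : Module.finrank ℝ ((Fin 6 → ℝ) →ₗ[ℝ] ℝ) = 6 := by
    simp [Module.finrank_linearMap]
  rw [hdual] at h
  obtain ⟨i, hi⟩ := Function.ne_iff.mp hv
  have hne : LinearMap.range ev ≠ ⊥ := by
    intro hb
    have h2 : ev (LinearMap.proj i) = 0 := by
      have h3 := LinearMap.mem_range_self ev (LinearMap.proj i)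
      rw [hb] at h3
      simpa using h3
    simp only [ev, LinearMap.applyₗ_apply_apply, LinearMap.proj_apply] at h2
    exact hi h2
  have hpos : 0 < Module.finrank ℝ (LinearMap.range ev) := by
    rw [Module.finrank_pos_iff]
    exact Submodule.nontrivial_iff_ne_bot.mpr hne
  omega

/-- For every linear form `L : ℝ⁶ → ℝ`, the span of `L∘A₁, …, L∘A₆, L` in the dual of `ℝ⁶`
has dimension at most `5`; in particular it is never the whole dual space. This is the
obstruction showing `F₃₃` admits no hyperplane section of `𝒜ₑ`-codimension `1`. -/
theorem span_L_comp_liftF33_linear_parts_le_five :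
    ∀ L : (Fin 6 → ℝ) →ₗ[ℝ] ℝ,
      Module.finrank ℝ
        (Submodule.span ℝ
          ({L ∘ₗ A1, L ∘ₗ A2, L ∘ₗ A3, L ∘ₗ A4, L ∘ₗ A5, L ∘ₗ A6, L} :
            Set ((Fin 6 → ℝ) →ₗ[ℝ] ℝ))) ≤ 5 := by
  intro L
  -- find a common nonzero zero `v` of all seven linear forms
  obtain ⟨v, hv0, hv⟩ : ∃ v : Fin 6 → ℝ, v ≠ 0 ∧
      (L ∘ₗ A1) v = 0 ∧ (L ∘ₗ A2) v = 0 ∧ (L ∘ₗ A3) v = 0 ∧ (L ∘ₗ A4) v = 0 ∧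
      (L ∘ₗ A5) v = 0 ∧ (L ∘ₗ A6) v = 0 ∧ L v = 0 := by
    by_cases h : L (Pi.single 4 1) = 0 ∧ L (Pi.single 5 1) = 0
    · refine ⟨Pi.single 4 1, ?_, ?_, ?_, ?_, ?_, ?_, ?_, h.1⟩
      · intro hz
        have := congrFun hz (4 : Fin 6)
        simp at this
      · simp [LinearMap.comp_apply, aux_A1_single 4 (Or.inl rfl), h.1]
      · simp [LinearMap.comp_apply, aux_A2_single 4 (Or.inl rfl)]
      · simp [LinearMap.comp_apply, aux_A3_single 4 (Or.inl rfl)]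
      · simp [LinearMap.comp_apply, aux_A4_single 4 (Or.inl rfl)]
      · simp [LinearMap.comp_apply, aux_A5_single 4 (Or.inl rfl)]
      · simp [LinearMap.comp_apply, aux_A6_single 4 (Or.inl rfl)]
    · set e := L (Pi.single 4 1) with he
      set f := L (Pi.single 5 1) with hf
      refine ⟨f • (Pi.single 4 1 : Fin 6 → ℝ) - e • (Pi.single 5 1 : Fin 6 → ℝ), ?_, ?_, ?_, ?_, ?_, ?_, ?_, ?_⟩
      · intro hz
        apply h
        constructor
        · have := congrFun hz (5 : Fin 6)
          simp at this
          simpa [he] using this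
        · have := congrFun hz (4 : Fin 6)
          simp at this
          simpa [hf] using this
      · simp only [LinearMap.comp_apply, map_sub, _root_.map_smul,
          aux_A1_single 4 (Or.inl rfl), aux_A1_single 5 (Or.inr rfl), smul_eq_mul, ← he, ← hf]
        ring
      · simp [LinearMap.comp_apply, map_sub, _root_.map_smul,
          aux_A2_single 4 (Or.inl rfl), aux_A2_single 5 (Or.inr rfl)]
      · simp [LinearMap.comp_apply, map_sub, _root_.map_smul,
          aux_A3_single 4 (Or.inl rfl), aux_A3_single 5 (Or.inr rfl)]
      · simp [LinearMap.comp_apply, map_sub, _root_.map_smul,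
          aux_A4_single 4 (Or.inl rfl), aux_A4_single 5 (Or.inr rfl)]
      · simp [LinearMap.comp_apply, map_sub, _root_.map_smul,
          aux_A5_single 4 (Or.inl rfl), aux_A5_single 5 (Or.inr rfl)]
      · simp [LinearMap.comp_apply, map_sub, _root_.map_smul,
          aux_A6_single 4 (Or.inl rfl), aux_A6_single 5 (Or.inr rfl)]
      · simp only [map_sub, _root_.map_smul, smul_eq_mul, ← he, ← hf]
        ring
  have hle : Submodule.span ℝ
      ({L ∘ₗ A1, L ∘ₗ A2, L ∘ₗ A3, L ∘ₗ A4, L ∘ₗ A5, L ∘ₗ A6, L} :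
        Set ((Fin 6 → ℝ) →ₗ[ℝ] ℝ)) ≤
      LinearMap.ker (LinearMap.applyₗ (R := ℝ) v) := by
    rw [Submodule.span_le]
    intro g hg
    simp only [Set.mem_insert_iff, Set.mem_singleton_iff] at hg
    obtain ⟨h1, h2, h3, h4, h5, h6, h7⟩ := hv
    rcases hg with rfl | rfl | rfl | rfl | rfl | rfl | rfl <;>
      simp only [SetLike.mem_coe, LinearMap.mem_ker, LinearMap.applyₗ_apply_apply] <;>
      assumption
  exact le_trans (Submodule.finrank_mono hle) (ker_eval_le6 v hv0)
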